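/- In the homogeneous lower model with parameter p on vertex set [n], the second moment of the number f_ℓ of ℓ-simplexes satisfies E(f_ℓ²) = Σ_{i=0}^{ℓ+1} C(n+1, ℓ+1) · C(ℓ+1, i) · C(n−ℓ, ℓ+1−i) · p^{2·2^{ℓ+1} − 2^i − 1}. -/

import Mathlib

open Finset

/-- The set of all simplexes: nonempty proper subsets of `[n] = {0,…,n}`. -/
def simps (n : ℕ) : Finset (Finset (Fin (n+1))) :=
  Finset.univ.filter (fun σ => σ.Nonempty ∧ σ ≠ Finset.univ)

/-- The Bernoulli probability of a set `M` of marked simplexes, with parameters `p`. -/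
def probM (n : ℕ) (p : Finset (Fin (n+1)) → ℝ) (M : Finset (Finset (Fin (n+1)))) : ℝ :=
  (∏ σ ∈ M, p σ) * ∏ σ ∈ simps n \ M, (1 - p σ)

/-- `σ` belongs to the lower random complex determined by the marked sets `M`:
every nonempty subset of `σ` is marked. -/
abbrev memY (n : ℕ) (M : Finset (Finset (Fin (n+1)))) (σ : Finset (Fin (n+1))) : Prop :=
  ∀ τ ∈ σ.powerset, τ.Nonempty → τ ∈ M

lemma sum_probM_subset' {α : Type*} [DecidableEq α] (A S : Finset α) (hS : S ⊆ A) (p : ℝ) :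
    ∑ M ∈ A.powerset, ((∏ _x ∈ M, p) * ∏ _x ∈ A \ M, (1 - p)) *
      (if S ⊆ M then (1:ℝ) else 0) = p ^ S.card := by
  rw [← Finset.sum_filter_add_sum_filter_not A.powerset (fun M => S ⊆ M)]
  have h2 : ∑ M ∈ A.powerset.filter (fun M => ¬ S ⊆ M),
      ((∏ _x ∈ M, p) * ∏ _x ∈ A \ M, (1 - p)) * (if S ⊆ M then (1:ℝ) else 0) = 0 := by
    apply Finset.sum_eq_zero
    intro M hM
    simp only [mem_filter] at hM
    simp [hM.2]
  rw [h2, add_zero]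
  have h1 : ∀ M ∈ A.powerset.filter (fun M => S ⊆ M),
      ((∏ _x ∈ M, p) * ∏ _x ∈ A \ M, (1 - p)) * (if S ⊆ M then (1:ℝ) else 0)
      = (∏ _x ∈ M, p) * ∏ _x ∈ A \ M, (1 - p) := by
    intro M hM
    simp only [mem_filter] at hM
    simp [hM.2]
  rw [Finset.sum_congr rfl h1]
  rw [Finset.sum_bij' (i := fun M _ => M \ S) (j := fun M' _ => M' ∪ S)
    (hi := ?_) (hj := ?_) (left_neg := ?_) (right_neg := ?_) (h := ?_)]
  · have key : ∀ M' ∈ (A \ S).powerset,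
        (∏ _x ∈ M' ∪ S, p) * ∏ _x ∈ A \ (M' ∪ S), (1 - p)
        = p ^ S.card * ((∏ _x ∈ M', p) * ∏ _x ∈ (A \ S) \ M', (1 - p)) := by
      intro M' hM'
      rw [mem_powerset] at hM'
      have hd : Disjoint M' S := by
        refine Finset.disjoint_left.2 fun x hx hxS => ?_
        exact (Finset.mem_sdiff.1 (hM' hx)).2 hxS
      rw [Finset.prod_union hd]
      have : A \ (M' ∪ S) = (A \ S) \ M' := by
        ext x; simp only [Finset.mem_sdiff, Finset.mem_union]; tauto
      rw [this]
      simp [Finset.prod_const]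
      ring
    rw [Finset.sum_congr rfl key, ← Finset.mul_sum]
    have := Finset.prod_add (fun _ : α => p) (fun _ : α => (1 - p)) (A \ S)
    simp only [add_sub_cancel] at this
    rw [← this]
    simp
  · intro M hM
    simp only [mem_filter, mem_powerset] at hM ⊢
    exact fun x hx => Finset.mem_sdiff.2 ⟨hM.1 (Finset.mem_sdiff.1 hx).1, (Finset.mem_sdiff.1 hx).2⟩
  · intro M' hM'
    rw [mem_powerset] at hM'
    simp only [mem_filter, mem_powerset]
    exact ⟨Finset.union_subset (fun x hx => (Finset.mem_sdiff.1 (hM' hx)).1) hS,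
      Finset.subset_union_right⟩
  · intro M hM
    simp only [mem_filter] at hM
    exact Finset.sdiff_union_of_subset hM.2
  · intro M' hM'
    rw [mem_powerset] at hM'
    show (M' ∪ S) \ S = M'
    rw [Finset.union_sdiff_right]
    exact Finset.sdiff_eq_self_of_disjoint (Finset.disjoint_left.2
      fun x hx hxS => (Finset.mem_sdiff.1 (hM' hx)).2 hxS)
  · intro M hM
    simp only [mem_filter] at hM
    rw [Finset.sdiff_union_of_subset hM.2]

lemma card_fiber' {α : Type*} [Fintype α] [DecidableEq α] (σ : Finset α) (i : ℕ) :
    ((Finset.univ.powersetCard (σ.card)).filter (fun τ => (σ ∩ τ).card = i)).card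
      = σ.card.choose i * (Fintype.card α - σ.card).choose (σ.card - i) := by
  have := Finset.card_nbij' (s := (Finset.univ.powersetCard (σ.card)).filter
      (fun τ => (σ ∩ τ).card = i))
    (t := σ.powersetCard i ×ˢ σᶜ.powersetCard (σ.card - i))
    (i := fun τ => (σ ∩ τ, τ \ σ)) (j := fun q => q.1 ∪ q.2) ?_ ?_ ?_ ?_
  · rw [this, Finset.card_product, Finset.card_powersetCard, Finset.card_powersetCard,
      Finset.card_compl]
  · intro τ hτ
    simp only [Finset.mem_coe, mem_filter, Finset.mem_powersetCard, mem_product, Finset.mem_powersetCard_univ] at hτ ⊢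
    refine ⟨⟨Finset.inter_subset_left, hτ.2⟩, fun x hx => ?_, ?_⟩
    · simp only [Finset.mem_compl]; exact (Finset.mem_sdiff.1 hx).2
    · have h3 := Finset.card_sdiff_add_card_inter τ σ
      have h2 : (σ ∩ τ).card = (τ ∩ σ).card := by rw [Finset.inter_comm]
      omega
  · intro q hq
    simp only [Finset.mem_coe, mem_product, Finset.mem_powersetCard, mem_filter, Finset.mem_powersetCard_univ] at hq ⊢
    obtain ⟨⟨h1s, h1c⟩, h2s, h2c⟩ := hq
    have hd : Disjoint q.1 q.2 := by
      refine Finset.disjoint_left.2 fun x hx hx2 => ?_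
      exact (Finset.mem_compl.1 (h2s hx2)) (h1s hx)
    have hi : i ≤ σ.card := by rw [← h1c]; exact Finset.card_le_card h1s
    constructor
    · exact ⟨Finset.subset_univ _, by
        rw [Finset.card_union_of_disjoint hd, h1c, h2c]; exact Nat.add_sub_cancel' hi⟩
    · have : σ ∩ (q.1 ∪ q.2) = q.1 := by
        rw [Finset.inter_union_distrib_left]
        have e2 : σ ∩ q.2 = ∅ := by
          refine Finset.eq_empty_of_forall_notMem fun x hx => ?_
          exact (Finset.mem_compl.1 (h2s (Finset.mem_inter.1 hx).2)) (Finset.mem_inter.1 hx).1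
        rw [e2, Finset.union_empty, Finset.inter_eq_right.2 h1s]
      rw [this, h1c]
  · intro τ hτ
    simp only [Finset.mem_coe, mem_filter] at hτ
    show σ ∩ τ ∪ τ \ σ = τ
    ext x; simp only [Finset.mem_union, Finset.mem_inter, Finset.mem_sdiff]; tauto
  · intro q hq
    simp only [Finset.mem_coe, mem_product, Finset.mem_powersetCard] at hq
    obtain ⟨⟨h1s, h1c⟩, h2s, h2c⟩ := hq
    have e2 : σ ∩ q.2 = ∅ := by
      refine Finset.eq_empty_of_forall_notMem fun x hx => ?_
      exact (Finset.mem_compl.1 (h2s (Finset.mem_inter.1 hx).2)) (Finset.mem_inter.1 hx).1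
    have e1 : σ ∩ (q.1 ∪ q.2) = q.1 := by
      rw [Finset.inter_union_distrib_left, e2, Finset.union_empty, Finset.inter_eq_right.2 h1s]
    have e3 : (q.1 ∪ q.2) \ σ = q.2 := by
      ext x
      simp only [Finset.mem_sdiff, Finset.mem_union]
      constructor
      · rintro ⟨h | h, hns⟩
        · exact absurd (h1s h) hns
        · exact h
      · intro h; exact ⟨Or.inr h, fun hs => (Finset.mem_compl.1 (h2s h)) hs⟩
    show (σ ∩ (q.1 ∪ q.2), (q.1 ∪ q.2) \ σ) = q
    rw [e1, e3]

lemma memY_and_iff (n : ℕ) (M : Finset (Finset (Fin (n+1)))) (σ τ : Finset (Fin (n+1))) :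
    (memY n M σ ∧ memY n M τ) ↔ (σ.powerset ∪ τ.powerset).erase ∅ ⊆ M := by
  constructor
  · rintro ⟨h1, h2⟩ ρ hρ
    rw [Finset.mem_erase, Finset.mem_union] at hρ
    obtain ⟨hne, h | h⟩ := hρ
    · exact h1 ρ h (Finset.nonempty_iff_ne_empty.2 hne)
    · exact h2 ρ h (Finset.nonempty_iff_ne_empty.2 hne)
  · intro h
    constructor
    · intro ρ hρ hne
      exact h (Finset.mem_erase.2 ⟨hne.ne_empty, Finset.mem_union_left _ hρ⟩)
    · intro ρ hρ hne
      exact h (Finset.mem_erase.2 ⟨hne.ne_empty, Finset.mem_union_right _ hρ⟩)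

lemma pairSet_subset_simps (n ℓ : ℕ) (hℓ : ℓ + 1 ≤ n) (σ τ : Finset (Fin (n+1)))
    (hσ : σ.card = ℓ + 1) (hτ : τ.card = ℓ + 1) :
    (σ.powerset ∪ τ.powerset).erase ∅ ⊆ simps n := by
  intro ρ hρ
  rw [Finset.mem_erase, Finset.mem_union, Finset.mem_powerset, Finset.mem_powerset] at hρ
  obtain ⟨hne, h⟩ := hρ
  have hcard : ρ.card ≤ ℓ + 1 := by
    rcases h with h | h
    · exact hσ ▸ Finset.card_le_card h
    · exact hτ ▸ Finset.card_le_card h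
  simp only [simps, Finset.mem_filter, Finset.mem_univ, true_and]
  refine ⟨Finset.nonempty_iff_ne_empty.2 hne, fun hu => ?_⟩
  rw [hu] at hcard
  simp only [Finset.card_univ, Fintype.card_fin] at hcard
  omega

lemma card_pairSet (n ℓ : ℕ) (σ τ : Finset (Fin (n+1)))
    (hσ : σ.card = ℓ + 1) (hτ : τ.card = ℓ + 1) :
    ((σ.powerset ∪ τ.powerset).erase ∅).card
      = 2 * 2 ^ (ℓ + 1) - 2 ^ ((σ ∩ τ).card) - 1 := by
  have hpp : σ.powerset ∩ τ.powerset = (σ ∩ τ).powerset := by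
    ext ρ
    simp only [Finset.mem_inter, Finset.mem_powerset, Finset.subset_inter_iff]
  have hu := Finset.card_union_add_card_inter σ.powerset τ.powerset
  rw [hpp, Finset.card_powerset, Finset.card_powerset, Finset.card_powerset, hσ, hτ] at hu
  rw [Finset.card_erase_of_mem (Finset.mem_union_left _ (Finset.empty_mem_powerset σ))]
  have h1 : (1:ℕ) ≤ 2 ^ ((σ ∩ τ).card) := Nat.one_le_two_pow
  have h2 : 2 ^ ((σ ∩ τ).card) ≤ 2 ^ (ℓ + 1) := by
    apply Nat.pow_le_pow_right (by norm_num)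
    rw [← hσ]; exact Finset.card_le_card Finset.inter_subset_left
  omega

/-- Second moment of the number `f_ℓ` of `ℓ`-simplexes in the homogeneous lower model. -/
theorem stmt10 (n ℓ : ℕ) (hℓ : ℓ + 1 ≤ n) (p : ℝ) (hp0 : 0 < p) (hp1 : p < 1) :
    ∑ M ∈ (simps n).powerset,
        probM n (fun _ => p) M *
          (((Finset.univ.filter (fun σ : Finset (Fin (n+1)) =>
              σ.card = ℓ + 1 ∧ memY n M σ)).card : ℝ)) ^ 2
      = ∑ i ∈ Finset.range (ℓ + 2),
          (((n+1).choose (ℓ+1) * (ℓ+1).choose i * (n-ℓ).choose (ℓ+1-i) : ℕ) : ℝ) *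
            p ^ (2 * 2 ^ (ℓ+1) - 2 ^ i - 1) := by
  classical
  set A : Finset (Finset (Fin (n+1))) := Finset.univ.powersetCard (ℓ+1) with hA
  have hcount : ∀ M : Finset (Finset (Fin (n+1))),
      ((Finset.univ.filter (fun σ : Finset (Fin (n+1)) =>
          σ.card = ℓ + 1 ∧ memY n M σ)).card : ℝ)
        = ∑ σ ∈ A, (if memY n M σ then (1:ℝ) else 0) := by
    intro M
    rw [Finset.sum_boole]
    congr 2
    rw [hA, Finset.powersetCard_eq_filter, Finset.powerset_univ, Finset.filter_filter]
  have step1 : ∑ M ∈ (simps n).powerset,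
        probM n (fun _ => p) M *
          (((Finset.univ.filter (fun σ : Finset (Fin (n+1)) =>
              σ.card = ℓ + 1 ∧ memY n M σ)).card : ℝ)) ^ 2
      = ∑ M ∈ (simps n).powerset, ∑ σ ∈ A, ∑ τ ∈ A,
          probM n (fun _ => p) M *
            (if memY n M σ ∧ memY n M τ then (1:ℝ) else 0) := by
    apply Finset.sum_congr rfl
    intro M _
    rw [hcount M, sq, Finset.sum_mul_sum, Finset.mul_sum]
    apply Finset.sum_congr rfl
    intro σ _
    rw [Finset.mul_sum]
    apply Finset.sum_congr rfl
    intro τ _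
    congr 1
    by_cases h1 : memY n M σ
    · by_cases h2 : memY n M τ
      · rw [if_pos h1, if_pos h2, if_pos (show memY n M σ ∧ memY n M τ from ⟨h1, h2⟩), mul_one]
      · rw [if_pos h1, if_neg h2,
          if_neg (fun hc : memY n M σ ∧ memY n M τ => h2 hc.2), one_mul]
    · rw [if_neg h1, if_neg (fun hc : memY n M σ ∧ memY n M τ => h1 hc.1), zero_mul]
  rw [step1, Finset.sum_comm]
  have swap2 : ∀ σ ∈ A, ∑ M ∈ (simps n).powerset, ∑ τ ∈ A,
        probM n (fun _ => p) M * (if memY n M σ ∧ memY n M τ then (1:ℝ) else 0)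
      = ∑ τ ∈ A, ∑ M ∈ (simps n).powerset,
        probM n (fun _ => p) M * (if memY n M σ ∧ memY n M τ then (1:ℝ) else 0) :=
    fun σ _ => Finset.sum_comm
  rw [Finset.sum_congr rfl swap2]
  have inner : ∀ σ ∈ A, ∀ τ ∈ A, ∑ M ∈ (simps n).powerset,
        probM n (fun _ => p) M * (if memY n M σ ∧ memY n M τ then (1:ℝ) else 0)
      = p ^ (2 * 2 ^ (ℓ+1) - 2 ^ ((σ ∩ τ).card) - 1) := by
    intro σ hσ τ hτ
    rw [hA, Finset.mem_powersetCard_univ] at hσ hτ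
    have hsub := pairSet_subset_simps n ℓ hℓ σ τ hσ hτ
    have key := sum_probM_subset' (simps n) _ hsub p
    rw [card_pairSet n ℓ σ τ hσ hτ] at key
    rw [← key]
    apply Finset.sum_congr rfl
    intro M _
    have : (if memY n M σ ∧ memY n M τ then (1:ℝ) else 0)
        = (if (σ.powerset ∪ τ.powerset).erase ∅ ⊆ M then (1:ℝ) else 0) := by
      by_cases h : (σ.powerset ∪ τ.powerset).erase ∅ ⊆ M
      · rw [if_pos h, if_pos ((memY_and_iff n M σ τ).2 h)]
      · rw [if_neg h, if_neg (fun hc => h ((memY_and_iff n M σ τ).1 hc))]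
    rw [this]
    rfl
  rw [Finset.sum_congr rfl (fun σ hσ => Finset.sum_congr rfl (inner σ hσ))]
  have fib : ∀ σ ∈ A, ∑ τ ∈ A, p ^ (2 * 2 ^ (ℓ+1) - 2 ^ ((σ ∩ τ).card) - 1)
      = ∑ i ∈ Finset.range (ℓ+2),
          (((ℓ+1).choose i * (n-ℓ).choose (ℓ+1-i) : ℕ) : ℝ) * p ^ (2 * 2 ^ (ℓ+1) - 2 ^ i - 1) := by
    intro σ hσ
    rw [hA, Finset.mem_powersetCard_univ] at hσ
    rw [← Finset.sum_fiberwise_of_maps_to (g := fun τ => (σ ∩ τ).card)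
      (t := Finset.range (ℓ+2)) (fun τ _ => by
        show (σ ∩ τ).card ∈ Finset.range (ℓ+2)
        rw [Finset.mem_range]
        have : (σ ∩ τ).card ≤ σ.card := Finset.card_le_card Finset.inter_subset_left
        omega)]
    apply Finset.sum_congr rfl
    intro i _
    have hterm : ∀ τ ∈ A.filter (fun τ => (σ ∩ τ).card = i),
        p ^ (2 * 2 ^ (ℓ+1) - 2 ^ ((σ ∩ τ).card) - 1) = p ^ (2 * 2 ^ (ℓ+1) - 2 ^ i - 1) := by
      intro τ hτ
      rw [(Finset.mem_filter.1 hτ).2]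
    rw [Finset.sum_congr rfl hterm, Finset.sum_const, nsmul_eq_mul]
    congr 2
    have hcf := card_fiber' σ i
    rw [hσ] at hcf
    simp only [Fintype.card_fin] at hcf
    rw [hA]
    rw [hcf, Nat.succ_sub_succ]
  rw [Finset.sum_congr rfl fib, Finset.sum_const, nsmul_eq_mul]
  have hAcard : (A.card : ℝ) = ((n+1).choose (ℓ+1) : ℕ) := by
    rw [hA, Finset.card_powersetCard, Finset.card_univ, Fintype.card_fin]
  rw [hAcard, Finset.mul_sum]
  apply Finset.sum_congr rfl
  intro i _
  push_cast
  ring
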